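/- Let φ₁, φ₂, φ₃ : ℤ² → ℤ be group homomorphisms. If R(φ₁, φ₂, φ₃) < ∞ then R(φ₁, φ₂) < ∞, R(φ₁, φ₃) < ∞, and the product R(φ₁, φ₂)·R(φ₁, φ₃) divides R(φ₁, φ₂, φ₃). -/
import Mathlib

/-- The (additive) twisted conjugacy relation on `A` determined by a pair of homomorphisms
`φ ψ : G →+ A`:  `α ∼ β` iff `β = φ(z) + α - ψ(z)` for some `z : G`. -/
def tcRelAdd {G A : Type*} [AddGroup G] [AddGroup A] (φ ψ : G →+ A) (α β : A) : Prop :=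
  ∃ z : G, β = φ z + α - ψ z

/-- The relation on pairs defining the Reidemeister classes of a triple of homomorphisms
`φ₁ φ₂ φ₃ : G →+ A`:  `(α₂, α₃) ∼ (β₂, β₃)` iff there is `z : G` with
`β₂ = φ₁(z) + α₂ - φ₂(z)` and `β₃ = φ₁(z) + α₃ - φ₃(z)`. -/
def tcRel₃Add {G A : Type*} [AddGroup G] [AddGroup A] (φ₁ φ₂ φ₃ : G →+ A)
    (a b : A × A) : Prop :=
  ∃ z : G, b.1 = φ₁ z + a.1 - φ₂ z ∧ b.2 = φ₁ z + a.2 - φ₃ z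

lemma enatCard_lt_top_iff (α : Type*) : ENat.card α < ⊤ ↔ Finite α := by
  constructor
  · intro h
    by_contra hf
    rw [not_finite_iff_infinite] at hf
    simp at h
  · intro h
    have := Fintype.ofFinite α
    rw [ENat.card_eq_coe_fintype_card]
    exact ENat.coe_lt_top _

def quot_tcRelAdd_equiv {G A : Type*} [AddGroup G] [AddCommGroup A] (φ ψ : G →+ A) :
    Quot (tcRelAdd φ ψ) ≃ A ⧸ (φ - ψ).range := by
  refine Quot.congrRight (r' := (QuotientAddGroup.leftRel (φ - ψ).range).r) ?_
  intro a b
  show tcRelAdd φ ψ a b ↔ QuotientAddGroup.leftRel (φ - ψ).range a b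
  rw [QuotientAddGroup.leftRel_apply]
  simp only [AddMonoidHom.mem_range, AddMonoidHom.sub_apply, tcRelAdd]
  constructor
  · rintro ⟨z, rfl⟩; exact ⟨z, by abel⟩
  · rintro ⟨z, hz⟩
    exact ⟨z, by rw [show φ z + a - ψ z = a + (φ z - ψ z) by abel, hz]; abel⟩

def quot_tcRel₃Add_equiv {G A : Type*} [AddGroup G] [AddCommGroup A] (φ₁ φ₂ φ₃ : G →+ A) :
    Quot (tcRel₃Add φ₁ φ₂ φ₃) ≃ (A × A) ⧸ ((φ₁ - φ₂).prod (φ₁ - φ₃)).range := by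
  refine Quot.congrRight
    (r' := (QuotientAddGroup.leftRel ((φ₁ - φ₂).prod (φ₁ - φ₃)).range).r) ?_
  intro a b
  show tcRel₃Add φ₁ φ₂ φ₃ a b ↔
    QuotientAddGroup.leftRel ((φ₁ - φ₂).prod (φ₁ - φ₃)).range a b
  rw [QuotientAddGroup.leftRel_apply]
  simp only [AddMonoidHom.mem_range, AddMonoidHom.prod_apply, AddMonoidHom.sub_apply,
    tcRel₃Add, Prod.ext_iff, Prod.fst_add, Prod.snd_add, Prod.fst_neg, Prod.snd_neg]
  constructor
  · rintro ⟨z, h1, h2⟩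
    exact ⟨z, by rw [h1]; abel, by rw [h2]; abel⟩
  · rintro ⟨z, h1, h2⟩
    refine ⟨z, ?_, ?_⟩
    · rw [show φ₁ z + a.1 - φ₂ z = a.1 + (φ₁ z - φ₂ z) by abel, h1]; abel
    · rw [show φ₁ z + a.2 - φ₃ z = a.2 + (φ₁ z - φ₃ z) by abel, h2]; abel

/-- Let `φ₁, φ₂, φ₃ : ℤ² → ℤ` be homomorphisms.  If `R(φ₁,φ₂,φ₃) < ∞` then
`R(φ₁,φ₂) < ∞`, `R(φ₁,φ₃) < ∞`, and the product `R(φ₁,φ₂)·R(φ₁,φ₃)` divides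
`R(φ₁,φ₂,φ₃)`. -/
theorem prod_dvd_reidemeister_number_torus (φ₁ φ₂ φ₃ : ℤ × ℤ →+ ℤ)
    (h : ENat.card (Quot (tcRel₃Add φ₁ φ₂ φ₃)) < ⊤) :
    ENat.card (Quot (tcRelAdd φ₁ φ₂)) < ⊤ ∧
    ENat.card (Quot (tcRelAdd φ₁ φ₃)) < ⊤ ∧
    Nat.card (Quot (tcRelAdd φ₁ φ₂)) * Nat.card (Quot (tcRelAdd φ₁ φ₃)) ∣
      Nat.card (Quot (tcRel₃Add φ₁ φ₂ φ₃)) := by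
  set δ₂ := φ₁ - φ₂ with hδ₂
  set δ₃ := φ₁ - φ₃ with hδ₃
  set D := δ₂.prod δ₃ with hD
  have e₂ := quot_tcRelAdd_equiv φ₁ φ₂
  have e₃ := quot_tcRelAdd_equiv φ₁ φ₃
  have e := quot_tcRel₃Add_equiv φ₁ φ₂ φ₃
  rw [← hδ₂] at e₂
  rw [← hδ₃] at e₃
  rw [← hδ₂, ← hδ₃, ← hD] at e
  -- the natural surjective hom
  set f : (ℤ × ℤ) →+ (ℤ ⧸ δ₂.range) × (ℤ ⧸ δ₃.range) :=
    ((QuotientAddGroup.mk' δ₂.range).comp (AddMonoidHom.fst ℤ ℤ)).prod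
      ((QuotientAddGroup.mk' δ₃.range).comp (AddMonoidHom.snd ℤ ℤ)) with hf
  have hker : D.range ≤ f.ker := by
    rintro x ⟨z, rfl⟩
    rw [AddMonoidHom.mem_ker]
    have h1 : (QuotientAddGroup.mk' δ₂.range) (δ₂ z) = 0 := by
      exact (QuotientAddGroup.eq_zero_iff _).2 ⟨z, rfl⟩
    have h2 : (QuotientAddGroup.mk' δ₃.range) (δ₃ z) = 0 := by
      exact (QuotientAddGroup.eq_zero_iff _).2 ⟨z, rfl⟩
    simp [hf, hD, h1, h2, Prod.ext_iff]
  set g := QuotientAddGroup.lift D.range f hker with hg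
  have hgs : Function.Surjective g := by
    rintro ⟨q₂, q₃⟩
    obtain ⟨x, rfl⟩ := QuotientAddGroup.mk'_surjective δ₂.range q₂
    obtain ⟨y, rfl⟩ := QuotientAddGroup.mk'_surjective δ₃.range q₃
    exact ⟨QuotientAddGroup.mk (x, y), rfl⟩
  -- finiteness
  rw [enatCard_lt_top_iff] at h
  have fQ : Finite ((ℤ × ℤ) ⧸ D.range) := Finite.of_equiv _ e
  have fprod : Finite ((ℤ ⧸ δ₂.range) × (ℤ ⧸ δ₃.range)) := Finite.of_surjective g hgs
  have f2 : Finite (ℤ ⧸ δ₂.range) := Finite.of_surjective (Prod.fst : (ℤ ⧸ δ₂.range) × (ℤ ⧸ δ₃.range) → ℤ ⧸ δ₂.range) Prod.fst_surjective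
  have f3 : Finite (ℤ ⧸ δ₃.range) := Finite.of_surjective (Prod.snd : (ℤ ⧸ δ₂.range) × (ℤ ⧸ δ₃.range) → ℤ ⧸ δ₃.range) Prod.snd_surjective
  refine ⟨?_, ?_, ?_⟩
  · rw [enatCard_lt_top_iff]; exact Finite.of_equiv _ e₂.symm
  · rw [enatCard_lt_top_iff]; exact Finite.of_equiv _ e₃.symm
  · have hd := AddSubgroup.card_dvd_of_surjective g hgs
    rw [Nat.card_prod] at hd
    rw [Nat.card_congr e₂, Nat.card_congr e₃, Nat.card_congr e]
    exact hd
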